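/- Suppose S is a set of proper intervals of [n+1] with |S| = i_max + 1 whose associahedron-facet intersection graph has exactly 2 connected components S₁ ⊔ S₂. Then one of S₁, S₂ is a singleton {γ}, γ is a special interval (i(γ) = i_max), and the other component consists exactly of all i_max intervals γ̃ that either intersect γ nontrivially or are disjoint from γ with γ ∪ γ̃ an interval. -/

import Mathlib

set_option maxHeartbeats 1000000


/-- An interval `{a, a+1, ..., b}` with `1 ≤ a ≤ b ≤ n+1`, viewed inside `[n+1]`. -/
def IsInterval (n : ℕ) (S : Finset ℕ) : Prop :=
  ∃ a b : ℕ, 1 ≤ a ∧ a ≤ b ∧ b ≤ n + 1 ∧ S = Finset.Icc a b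

/-- `γ̃` either intersects `γ` nontrivially, or is disjoint from `γ` with
`γ ∪ γ̃` an interval (connected union in the path graph). -/
def iRel (n : ℕ) (γ J : Finset ℕ) : Prop :=
  (γ ∩ J ≠ ∅ ∧ γ ∩ J ≠ γ ∧ γ ∩ J ≠ J) ∨ (γ ∩ J = ∅ ∧ IsInterval n (γ ∪ J))

/-- `i(γ)`: the number of intervals `γ̃` related to `γ` as above. -/
noncomputable def iCount (n : ℕ) (γ : Finset ℕ) : ℕ :=
  Nat.card {J : Finset ℕ // IsInterval n J ∧ iRel n γ J}

/-- `i_max`: the maximum of `i(γ)` over all intervals `γ`. -/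
noncomputable def iMax (n : ℕ) : ℕ :=
  sSup {k | ∃ γ : Finset ℕ, IsInterval n γ ∧ iCount n γ = k}

def facetMeets (n : ℕ) (I J : Finset ℕ) : Prop :=
  (I ∩ J = ∅ ∨ I ∩ J = I ∨ I ∩ J = J) ∧ ¬(I ∩ J = ∅ ∧ IsInterval n (I ∪ J))

/-! ### Auxiliary lemmas -/

lemma icc_inter_icc (a b c d : ℕ) :
    Finset.Icc a b ∩ Finset.Icc c d = Finset.Icc (max a c) (min b d) := by
  ext x; simp only [Finset.mem_inter, Finset.mem_Icc]; omega

lemma not_facetMeets_iRel {n : ℕ} {I J : Finset ℕ} (h : ¬ facetMeets n I J) :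
    iRel n I J := by
  unfold facetMeets at h
  unfold iRel
  tauto

/-- The basic characterization of `iRel` on explicit intervals. -/
lemma irel_iff {n a b c d : ℕ} (ha : 1 ≤ a) (hab : a ≤ b) (hb : b ≤ n+1)
    (hc : 1 ≤ c) (hcd : c ≤ d) (hd : d ≤ n+1) :
    iRel n (Finset.Icc a b) (Finset.Icc c d) ↔
      ((a < c ∧ c ≤ b+1 ∧ b < d) ∨ (c < a ∧ a ≤ d+1 ∧ d < b)) := by
  rw [iRel, icc_inter_icc]
  constructor
  · rintro (⟨h1, h2, h3⟩ | ⟨h1, h2⟩)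
    · have hne : max a c ≤ min b d := by
        by_contra hh
        exact h1 (Finset.Icc_eq_empty hh)
      have h2' : ¬ (max a c = a ∧ min b d = b) := by
        rintro ⟨x, y⟩; exact h2 (by rw [x, y])
      have h3' : ¬ (max a c = c ∧ min b d = d) := by
        rintro ⟨x, y⟩; exact h3 (by rw [x, y])
      omega
    · have hne : ¬ (max a c ≤ min b d) := by
        intro hh
        have : max a c ∈ Finset.Icc (max a c) (min b d) := by
          simp only [Finset.mem_Icc]; omega
        rw [h1] at this
        exact absurd this (Finset.notMem_empty _)
      obtain ⟨e, f, he, hef, hf, hEq⟩ := h2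
      rw [Finset.ext_iff] at hEq
      simp only [Finset.mem_union, Finset.mem_Icc] at hEq
      have e1 := hEq a
      have e2 := hEq c
      have e3 := hEq (b+1)
      have e4 := hEq (d+1)
      have e5 := hEq b
      have e6 := hEq d
      omega
  · rintro (⟨h1, h2, h3⟩ | ⟨h1, h2, h3⟩)
    · by_cases hbc : c ≤ b
      · refine Or.inl ⟨?_, ?_, ?_⟩
        · intro h
          rw [Finset.ext_iff] at h
          have := h c
          simp only [Finset.mem_Icc, Finset.notMem_empty, iff_false] at this
          omega
        · intro h
          rw [Finset.ext_iff] at h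
          have := h a
          simp only [Finset.mem_Icc] at this
          omega
        · intro h
          rw [Finset.ext_iff] at h
          have := h d
          simp only [Finset.mem_Icc] at this
          omega
      · refine Or.inr ⟨Finset.Icc_eq_empty (by omega), a, d, ha, by omega, hd, ?_⟩
        ext z
        simp only [Finset.mem_union, Finset.mem_Icc]
        omega
    · by_cases had : a ≤ d
      · refine Or.inl ⟨?_, ?_, ?_⟩
        · intro h
          rw [Finset.ext_iff] at h
          have := h a
          simp only [Finset.mem_Icc, Finset.notMem_empty, iff_false] at this
          omega
        · intro h
          rw [Finset.ext_iff] at h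
          have := h b
          simp only [Finset.mem_Icc] at this
          omega
        · intro h
          rw [Finset.ext_iff] at h
          have := h c
          simp only [Finset.mem_Icc] at this
          omega
      · refine Or.inr ⟨Finset.Icc_eq_empty (by omega), c, b, hc, by omega, hb, ?_⟩
        ext z
        simp only [Finset.mem_union, Finset.mem_Icc]
        omega

/-- The explicit finset of intervals related to `Icc a b`. -/
def nbhd (n a b : ℕ) : Finset (Finset ℕ) :=
  ((Finset.Ioc a (b+1)) ×ˢ (Finset.Ioc b (n+1))).image (fun p => Finset.Icc p.1 p.2) ∪
  ((Finset.Icc 1 (a-1)) ×ˢ (Finset.Icc (a-1) (b-1))).image (fun p => Finset.Icc p.1 p.2)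

lemma icc_inj {a b c d : ℕ} (hab : a ≤ b) (h : Finset.Icc a b = Finset.Icc c d) :
    a = c ∧ b = d := by
  rw [Finset.ext_iff] at h
  have h1 := h a
  have h2 := h b
  have h3 := h c
  have h4 := h d
  simp only [Finset.mem_Icc] at h1 h2 h3 h4
  omega

lemma nbhd_sets {n a b : ℕ} (ha : 1 ≤ a) (hab : a ≤ b) (hb : b ≤ n+1) :
    {J : Finset ℕ | IsInterval n J ∧ iRel n (Finset.Icc a b) J} = ↑(nbhd n a b) := by
  ext J
  simp only [Set.mem_setOf_eq, nbhd, Finset.coe_union, Set.mem_union, Finset.coe_image,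
    Set.mem_image, Finset.mem_coe, Finset.mem_product, Finset.mem_Ioc, Finset.mem_Icc]
  constructor
  · rintro ⟨⟨c, d, hc, hcd, hd, rfl⟩, hrel⟩
    rw [irel_iff ha hab hb hc hcd hd] at hrel
    rcases hrel with ⟨h1, h2, h3⟩ | ⟨h1, h2, h3⟩
    · exact Or.inl ⟨(c, d), ⟨⟨h1, h2⟩, ⟨h3, hd⟩⟩, rfl⟩
    · exact Or.inr ⟨(c, d), ⟨⟨hc, by omega⟩, ⟨by omega, by omega⟩⟩, rfl⟩
  · rintro (⟨⟨c, d⟩, ⟨⟨h1, h2⟩, ⟨h3, h4⟩⟩, rfl⟩ | ⟨⟨c, d⟩, ⟨⟨h1, h2⟩, ⟨h3, h4⟩⟩, rfl⟩)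
    · have hc : 1 ≤ c := by omega
      have hcd : c ≤ d := by omega
      refine ⟨⟨c, d, hc, hcd, h4, rfl⟩, ?_⟩
      rw [irel_iff ha hab hb hc hcd h4]
      exact Or.inl ⟨h1, h2, h3⟩
    · have hcd : c ≤ d := by omega
      have hd : d ≤ n + 1 := by omega
      refine ⟨⟨c, d, h1, hcd, hd, rfl⟩, ?_⟩
      rw [irel_iff ha hab hb h1 hcd hd]
      exact Or.inr ⟨by omega, by omega, by omega⟩

lemma nbhd_card {n a b : ℕ} (ha : 1 ≤ a) (hab : a ≤ b) (hb : b ≤ n+1) :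
    (nbhd n a b).card = (b + 1 - a) * (n + 1 - b) + (a - 1) * (b - a + 1) := by
  rw [nbhd, Finset.card_union_of_disjoint, Finset.card_image_of_injOn,
    Finset.card_image_of_injOn, Finset.card_product, Finset.card_product]
  · simp only [Nat.card_Ioc, Nat.card_Icc]
    have e1 : a - 1 + 1 - 1 = a - 1 := by omega
    have e2 : b - 1 + 1 - (a - 1) = b - a + 1 := by omega
    rw [e1, e2]
  · rintro ⟨c, d⟩ hcd ⟨c', d'⟩ hcd' h
    simp only [Finset.mem_coe, Finset.mem_product, Finset.mem_Icc] at hcd hcd'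
    have := icc_inj (by omega : c ≤ d) h
    simp only [Prod.mk.injEq]
    omega
  · rintro ⟨c, d⟩ hcd ⟨c', d'⟩ hcd' h
    simp only [Finset.mem_coe, Finset.mem_product, Finset.mem_Ioc] at hcd hcd'
    have := icc_inj (by omega : c ≤ d) h
    simp only [Prod.mk.injEq]
    omega
  · rw [Finset.disjoint_left]
    rintro J hJ hJ'
    simp only [Finset.mem_image, Finset.mem_product, Finset.mem_Ioc, Finset.mem_Icc] at hJ hJ'
    obtain ⟨⟨c, d⟩, ⟨⟨h1, h2⟩, ⟨h3, h4⟩⟩, rfl⟩ := hJ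
    obtain ⟨⟨c', d'⟩, ⟨⟨h1', h2'⟩, ⟨h3', h4'⟩⟩, h⟩ := hJ'
    have := icc_inj (by omega : c' ≤ d') h
    omega

lemma iCount_eq {n a b : ℕ} (ha : 1 ≤ a) (hab : a ≤ b) (hb : b ≤ n+1) :
    iCount n (Finset.Icc a b) = (b + 1 - a) * (n + 1 - b) + (a - 1) * (b - a + 1) := by
  rw [← nbhd_card ha hab hb, iCount]
  have h0 : Nat.card {J : Finset ℕ // IsInterval n J ∧ iRel n (Finset.Icc a b) J}
      = ({J : Finset ℕ | IsInterval n J ∧ iRel n (Finset.Icc a b) J} : Set (Finset ℕ)).ncard :=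
    Nat.card_coe_set_eq _
  rw [h0, nbhd_sets ha hab hb, Set.ncard_coe_finset]

lemma iCount_le {n a b : ℕ} (ha : 1 ≤ a) (hab : a ≤ b) (hb : b ≤ n+1) :
    iCount n (Finset.Icc a b) ≤ (n+1)^2 / 4 := by
  rw [iCount_eq ha hab hb]
  rw [Nat.le_div_iff_mul_le (by norm_num)]
  obtain ⟨A, rfl⟩ : ∃ A, a = A + 1 := ⟨a - 1, by omega⟩
  obtain ⟨L, rfl⟩ : ∃ L, b = (A + 1) + L := ⟨b - (A + 1), by omega⟩
  obtain ⟨K, rfl⟩ : ∃ K, n = A + L + K := ⟨n - A - L, by omega⟩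
  have e1 : A + 1 + L + 1 - (A + 1) = L + 1 := by omega
  have e2 : A + L + K + 1 - (A + 1 + L) = K := by omega
  have e3 : A + 1 - 1 = A := by omega
  have e4 : A + 1 + L - (A + 1) + 1 = L + 1 := by omega
  rw [e1, e2, e3, e4]
  have : ((L + 1) * K + A * (L + 1)) * 4 = 4 * (L + 1) * (A + K) := by ring
  rw [this]
  have h4 : (L + 1) + (A + K) = A + L + K + 1 + 1 - 1 := by omega
  zify
  nlinarith [sq_nonneg ((L : ℤ) + 1 - A - K)]

lemma iMax_eq (n : ℕ) : iMax n = (n+1)^2 / 4 := by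
  have hub : ∀ k ∈ {k | ∃ γ : Finset ℕ, IsInterval n γ ∧ iCount n γ = k},
      k ≤ (n+1)^2/4 := by
    rintro k ⟨γ, ⟨a, b, ha, hab, hb, rfl⟩, rfl⟩
    exact iCount_le ha hab hb
  have hmem : (n+1)^2/4 ∈ {k | ∃ γ : Finset ℕ, IsInterval n γ ∧ iCount n γ = k} := by
    refine ⟨Finset.Icc 1 ((n+2)/2), ⟨1, (n+2)/2, le_refl 1, by omega, by omega, rfl⟩, ?_⟩
    rw [iCount_eq (le_refl 1) (by omega) (by omega)]
    have e0 : (1:ℕ) - 1 = 0 := rfl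
    have e1 : (n+2)/2 + 1 - 1 = (n+2)/2 := by omega
    rw [e0, e1, Nat.zero_mul, Nat.add_zero]
    rcases Nat.even_or_odd (n+1) with ⟨k, hk⟩ | ⟨k, hk⟩
    · have hb : (n+2)/2 = k := by omega
      have hmk : n + 1 - k = k := by omega
      rw [hb, hmk]
      have hsq : (n+1)^2 = 4 * (k * k) := by rw [hk]; ring
      rw [hsq]
      exact (Nat.mul_div_cancel_left _ (by norm_num)).symm
    · have hb : (n+2)/2 = k + 1 := by omega
      have hmk : n + 1 - (k + 1) = k := by omega
      rw [hb, hmk]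
      have hsq : (n+1)^2 = 4 * (k * k + k) + 1 := by rw [hk]; ring
      rw [hsq]
      rw [Nat.mul_add_div (by norm_num : (0:ℕ) < 4)]
      have e14 : (1:ℕ)/4 = 0 := rfl
      rw [e14, Nat.add_zero]
      ring
  rw [iMax]
  apply le_antisymm
  · exact csSup_le ⟨_, hmem⟩ hub
  · exact le_csSup ⟨(n+1)^2/4, hub⟩ hmem

/-! ### The key combinatorial lemma -/

/-- crossing of "diagonals" in linear form -/
def dcross (x y : ℕ × ℕ) : Prop :=
  (x.1 < y.1 ∧ y.1 < x.2 ∧ x.2 < y.2) ∨ (y.1 < x.1 ∧ x.1 < y.2 ∧ y.2 < x.2)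

lemma key_arith {a b c d s : ℕ} (ha : 1 ≤ a) (hb : 1 ≤ b) (hc : 1 ≤ c) (hd : 1 ≤ d)
    (hab : 2 ≤ a * b) (hcd : 2 ≤ c * d) (hs : a + b + c + d ≤ s + 2) :
    a * b + c * d ≤ s ^ 2 / 4 := by
  rw [Nat.le_div_iff_mul_le (by norm_num)]
  have hab3 : 3 ≤ a + b := by
    by_contra h
    have hab1 : a = 1 ∧ b = 1 := by omega
    obtain ⟨rfl, rfl⟩ := hab1
    simp at hab
  have hcd3 : 3 ≤ c + d := by
    by_contra h
    have hcd1 : c = 1 ∧ d = 1 := by omega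
    obtain ⟨rfl, rfl⟩ := hcd1
    simp at hcd
  have h1 : 4 * (a * b) ≤ (a + b)^2 := by nlinarith [sq_nonneg ((a:ℤ) - b)]
  have h2 : 4 * (c * d) ≤ (c + d)^2 := by nlinarith [sq_nonneg ((c:ℤ) - d)]
  by_cases h33 : a + b = 3 ∧ c + d = 3
  · obtain ⟨h3, h4⟩ := h33
    have hab2 : a * b = 2 := by
      have hh : (a = 1 ∧ b = 2) ∨ (a = 2 ∧ b = 1) := by omega
      rcases hh with ⟨rfl, rfl⟩ | ⟨rfl, rfl⟩ <;> rfl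
    have hcd2 : c * d = 2 := by
      have hh : (c = 1 ∧ d = 2) ∨ (c = 2 ∧ d = 1) := by omega
      rcases hh with ⟨rfl, rfl⟩ | ⟨rfl, rfl⟩ <;> rfl
    have hs4 : 4 ≤ s := by omega
    rw [hab2, hcd2]
    nlinarith
  · obtain ⟨S, hS⟩ : ∃ S, a + b = S + 2 := ⟨a + b - 2, by omega⟩
    obtain ⟨T, hT⟩ : ∃ T, c + d = T + 2 := ⟨c + d - 2, by omega⟩
    have hST : 2 ≤ S * T := by
      have hh : 2 ≤ S ∨ 2 ≤ T := by omega
      rcases hh with h | h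
      · calc 2 = 2 * 1 := rfl
          _ ≤ S * T := Nat.mul_le_mul (by omega) (by omega)
      · calc 2 = 1 * 2 := rfl
          _ ≤ S * T := Nat.mul_le_mul (by omega) (by omega)
    rw [hS] at h1
    rw [hT] at h2
    have hsum : S + T + 2 ≤ s := by omega
    have hfin : (S + 2)^2 + (T + 2)^2 ≤ (S + T + 2)^2 := by nlinarith [hST]
    have hmono : (S + T + 2)^2 ≤ s^2 := Nat.pow_le_pow_left hsum 2
    calc (a * b + c * d) * 4 = 4 * (a * b) + 4 * (c * d) := by ring
      _ ≤ (S + 2)^2 + (T + 2)^2 := by linarith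
      _ ≤ (S + T + 2)^2 := hfin
      _ ≤ s^2 := hmono

lemma key_core {m : ℕ} (A B : Finset (ℕ × ℕ))
    (hA : ∀ x ∈ A, x.1 < x.2 ∧ x.2 ≤ m + 1)
    (hB : ∀ x ∈ B, x.1 < x.2 ∧ x.2 ≤ m + 1)
    (hAB : ∀ x ∈ A, ∀ y ∈ B, dcross x y)
    (h2A : 2 ≤ A.card) (h2B : 2 ≤ B.card)
    (u v x y : ℕ) (ha0 : (u, v) ∈ A) (hb0 : (x, y) ∈ B)
    (h1 : u < x) (h2 : x < v) (h3 : v < y) :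
    A.card + B.card ≤ m ^ 2 / 4 := by
  classical
  set VA : Finset ℕ := A.image Prod.fst ∪ A.image Prod.snd with hVA
  set VB : Finset ℕ := B.image Prod.fst ∪ B.image Prod.snd with hVB
  set F1 : Finset ℕ := VA.filter (fun w => x < w ∧ w < y) with hF1
  set F2 : Finset ℕ := VA.filter (fun w => w < x ∨ y < w) with hF2
  set G1 : Finset ℕ := VB.filter (fun w => u < w ∧ w < v) with hG1
  set G2 : Finset ℕ := VB.filter (fun w => w < u ∨ v < w) with hG2
  have cardA : A.card ≤ F1.card * F2.card := by
    rw [← Finset.card_product]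
    apply Finset.card_le_card_of_injOn
      (fun p => if x < p.1 ∧ p.1 < y then (p.1, p.2) else (p.2, p.1))
    · intro p hp
      have hcr := hAB p hp (x, y) hb0
      simp only [dcross] at hcr
      have hp1 : p.1 ∈ VA := Finset.mem_union_left _ (Finset.mem_image_of_mem _ hp)
      have hp2 : p.2 ∈ VA := Finset.mem_union_right _ (Finset.mem_image_of_mem _ hp)
      show (if x < p.1 ∧ p.1 < y then (p.1, p.2) else (p.2, p.1)) ∈ F1 ×ˢ F2
      split_ifs with h
      · simp only [Finset.mem_product, hF1, hF2, Finset.mem_filter]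
        exact ⟨⟨hp1, h.1, h.2⟩, ⟨hp2, by omega⟩⟩
      · simp only [Finset.mem_product, hF1, hF2, Finset.mem_filter]
        refine ⟨⟨hp2, by omega⟩, ⟨hp1, by omega⟩⟩
    · intro p hp q hq hpq
      have hcp := hAB p hp (x, y) hb0
      have hcq := hAB q hq (x, y) hb0
      simp only [dcross] at hcp hcq
      have hpq' : (if x < p.1 ∧ p.1 < y then (p.1, p.2) else (p.2, p.1))
          = (if x < q.1 ∧ q.1 < y then (q.1, q.2) else (q.2, q.1)) := hpq
      clear hpq
      split_ifs at hpq' <;>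
        simp only [Prod.mk.injEq] at hpq' <;>
        obtain ⟨e1, e2⟩ := hpq' <;>
        rcases hcp with ⟨c1, c2, c3⟩ | ⟨c1, c2, c3⟩ <;>
        rcases hcq with ⟨d1, d2, d3⟩ | ⟨d1, d2, d3⟩ <;>
        exact Prod.ext (by omega) (by omega)
  have cardB : B.card ≤ G1.card * G2.card := by
    rw [← Finset.card_product]
    apply Finset.card_le_card_of_injOn
      (fun p => if u < p.1 ∧ p.1 < v then (p.1, p.2) else (p.2, p.1))
    · intro p hp
      have hcr := hAB (u, v) ha0 p hp
      simp only [dcross] at hcr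
      have hp1 : p.1 ∈ VB := Finset.mem_union_left _ (Finset.mem_image_of_mem _ hp)
      have hp2 : p.2 ∈ VB := Finset.mem_union_right _ (Finset.mem_image_of_mem _ hp)
      show (if u < p.1 ∧ p.1 < v then (p.1, p.2) else (p.2, p.1)) ∈ G1 ×ˢ G2
      split_ifs with h
      · simp only [Finset.mem_product, hG1, hG2, Finset.mem_filter]
        exact ⟨⟨hp1, h.1, h.2⟩, ⟨hp2, by omega⟩⟩
      · simp only [Finset.mem_product, hG1, hG2, Finset.mem_filter]
        refine ⟨⟨hp2, by omega⟩, ⟨hp1, by omega⟩⟩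
    · intro p hp q hq hpq
      have hcp := hAB (u, v) ha0 p hp
      have hcq := hAB (u, v) ha0 q hq
      simp only [dcross] at hcp hcq
      have hpq' : (if u < p.1 ∧ p.1 < v then (p.1, p.2) else (p.2, p.1))
          = (if u < q.1 ∧ q.1 < v then (q.1, q.2) else (q.2, q.1)) := hpq
      clear hpq
      split_ifs at hpq' <;>
        simp only [Prod.mk.injEq] at hpq' <;>
        obtain ⟨e1, e2⟩ := hpq' <;>
        rcases hcp with ⟨c1, c2, c3⟩ | ⟨c1, c2, c3⟩ <;>
        rcases hcq with ⟨d1, d2, d3⟩ | ⟨d1, d2, d3⟩ <;>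
        exact Prod.ext (by omega) (by omega)
  have hVdisj : Disjoint VA VB := by
    rw [Finset.disjoint_left]
    intro w hwA hwB
    simp only [hVA, hVB, Finset.mem_union, Finset.mem_image] at hwA hwB
    rcases hwA with ⟨p, hp, hpe⟩ | ⟨p, hp, hpe⟩ <;>
      rcases hwB with ⟨q, hq, hqe⟩ | ⟨q, hq, hqe⟩ <;>
      (have hc := hAB p hp q hq; simp only [dcross] at hc; omega)
  have hF12 : F1.card + F2.card ≤ VA.card := by
    rw [← Finset.card_union_of_disjoint]
    · exact Finset.card_le_card
        (Finset.union_subset (Finset.filter_subset _ _) (Finset.filter_subset _ _))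
    · rw [Finset.disjoint_left]
      intro w hw1 hw2
      simp only [hF1, hF2, Finset.mem_filter] at hw1 hw2
      omega
  have hG12 : G1.card + G2.card ≤ VB.card := by
    rw [← Finset.card_union_of_disjoint]
    · exact Finset.card_le_card
        (Finset.union_subset (Finset.filter_subset _ _) (Finset.filter_subset _ _))
    · rw [Finset.disjoint_left]
      intro w hw1 hw2
      simp only [hG1, hG2, Finset.mem_filter] at hw1 hw2
      omega
  have hVAB : VA.card + VB.card ≤ m + 2 := by
    rw [← Finset.card_union_of_disjoint hVdisj]
    have hsub : VA ∪ VB ⊆ Finset.range (m + 2) := by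
      intro w hw
      simp only [Finset.mem_union, hVA, hVB, Finset.mem_image] at hw
      simp only [Finset.mem_range]
      rcases hw with (⟨p, hp, hpe⟩ | ⟨p, hp, hpe⟩) | (⟨p, hp, hpe⟩ | ⟨p, hp, hpe⟩)
      · have := hA p hp; omega
      · have := hA p hp; omega
      · have := hB p hp; omega
      · have := hB p hp; omega
    calc (VA ∪ VB).card ≤ (Finset.range (m+2)).card := Finset.card_le_card hsub
      _ = m + 2 := Finset.card_range _
  have hF1ne : 1 ≤ F1.card := by
    have hm : v ∈ F1 := by
      simp only [hF1, Finset.mem_filter, hVA, Finset.mem_union, Finset.mem_image]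
      exact ⟨Or.inr ⟨(u, v), ha0, rfl⟩, h2, h3⟩
    exact Finset.card_pos.mpr ⟨v, hm⟩
  have hF2ne : 1 ≤ F2.card := by
    have hm : u ∈ F2 := by
      simp only [hF2, Finset.mem_filter, hVA, Finset.mem_union, Finset.mem_image]
      exact ⟨Or.inl ⟨(u, v), ha0, rfl⟩, Or.inl h1⟩
    exact Finset.card_pos.mpr ⟨u, hm⟩
  have hG1ne : 1 ≤ G1.card := by
    have hm : x ∈ G1 := by
      simp only [hG1, Finset.mem_filter, hVB, Finset.mem_union, Finset.mem_image]
      exact ⟨Or.inl ⟨(x, y), hb0, rfl⟩, h1, h2⟩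
    exact Finset.card_pos.mpr ⟨x, hm⟩
  have hG2ne : 1 ≤ G2.card := by
    have hm : y ∈ G2 := by
      simp only [hG2, Finset.mem_filter, hVB, Finset.mem_union, Finset.mem_image]
      exact ⟨Or.inr ⟨(x, y), hb0, rfl⟩, Or.inr h3⟩
    exact Finset.card_pos.mpr ⟨y, hm⟩
  have hfinal := key_arith (s := m) hF1ne hF2ne hG1ne hG2ne (le_trans h2A cardA)
    (le_trans h2B cardB) (by omega)
  exact le_trans (Nat.add_le_add cardA cardB) hfinal

lemma key_lemma {m : ℕ} (A B : Finset (ℕ × ℕ))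
    (hA : ∀ x ∈ A, x.1 < x.2 ∧ x.2 ≤ m + 1)
    (hB : ∀ x ∈ B, x.1 < x.2 ∧ x.2 ≤ m + 1)
    (hAB : ∀ x ∈ A, ∀ y ∈ B, dcross x y)
    (h2A : 2 ≤ A.card) (h2B : 2 ≤ B.card) :
    A.card + B.card ≤ m ^ 2 / 4 := by
  obtain ⟨a0, ha0⟩ := Finset.card_pos.mp (by omega : 0 < A.card)
  obtain ⟨b0, hb0⟩ := Finset.card_pos.mp (by omega : 0 < B.card)
  have hd0 := hAB a0 ha0 b0 hb0
  simp only [dcross] at hd0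
  rcases hd0 with ⟨c1, c2, c3⟩ | ⟨c1, c2, c3⟩
  · exact key_core A B hA hB hAB h2A h2B a0.1 a0.2 b0.1 b0.2
      (by rw [Prod.mk.eta]; exact ha0) (by rw [Prod.mk.eta]; exact hb0) c1 c2 c3
  · rw [add_comm]
    refine key_core B A hB hA ?_ h2B h2A b0.1 b0.2 a0.1 a0.2
      (by rw [Prod.mk.eta]; exact hb0) (by rw [Prod.mk.eta]; exact ha0) c1 c2 c3
    intro p hp q hq
    have hqp := hAB q hq p hp
    simp only [dcross] at hqp ⊢
    tauto

/-! ### Main theorem -/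

theorem stmt13 {n : ℕ} (S : Finset (Finset ℕ))
    (hS : ∀ I ∈ S, IsInterval n I ∧ I ≠ Finset.Icc 1 (n + 1))
    (hcard : S.card = iMax n + 1)
    (h2 : Nat.card
      (SimpleGraph.fromRel
        fun I J : {I // I ∈ S} => facetMeets n I.1 J.1).ConnectedComponent = 2) :
    ∃ γ ∈ S, iCount n γ = iMax n ∧
      ∀ J : Finset ℕ, (J ∈ S ∧ J ≠ γ) ↔ (IsInterval n J ∧ iRel n γ J) := by
  classical
  set G := SimpleGraph.fromRel (fun I J : {I // I ∈ S} => facetMeets n I.1 J.1) with hG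
  set M := (n+1)^2/4 with hM
  rw [iMax_eq] at hcard
  rw [← hM] at hcard
  rw [Nat.card_eq_two_iff] at h2
  obtain ⟨c₁, c₂, hc12, hcov⟩ := h2
  have hcov' : ∀ c : G.ConnectedComponent, c = c₁ ∨ c = c₂ := by
    intro c
    have hm : c ∈ ({c₁, c₂} : Set G.ConnectedComponent) := hcov ▸ Set.mem_univ c
    simpa using hm
  set T₁ : Finset {I // I ∈ S} := S.attach.filter (fun v => G.connectedComponentMk v = c₁)
    with hT₁
  set T₂ : Finset {I // I ∈ S} := S.attach.filter (fun v => G.connectedComponentMk v = c₂)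
    with hT₂
  have hunion : S.attach = T₁ ∪ T₂ := by
    ext v
    simp only [hT₁, hT₂, Finset.mem_union, Finset.mem_filter, Finset.mem_attach, true_and]
    simpa using hcov' (G.connectedComponentMk v)
  have hdisj : Disjoint T₁ T₂ := by
    rw [Finset.disjoint_left]
    intro v hv1 hv2
    simp only [hT₁, hT₂, Finset.mem_filter] at hv1 hv2
    exact hc12 (hv1.2 ▸ hv2.2)
  have hcross : ∀ v ∈ T₁, ∀ w ∈ T₂, iRel n v.1 w.1 ∧ v.1 ≠ w.1 := by
    intro v hv w hw
    simp only [hT₁, hT₂, Finset.mem_filter] at hv hw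
    have hvw : v ≠ w := by
      intro h
      exact hc12 (hv.2 ▸ h ▸ hw.2)
    have hnadj : ¬ G.Adj v w := by
      intro hadj
      exact hc12 (hv.2 ▸ hw.2 ▸ (SimpleGraph.ConnectedComponent.eq.mpr hadj.reachable))
    rw [hG, SimpleGraph.fromRel_adj] at hnadj
    push_neg at hnadj
    have hmeets := hnadj hvw
    refine ⟨not_facetMeets_iRel hmeets.1, ?_⟩
    intro h
    exact hvw (Subtype.ext h)
  have hne₁ : T₁.Nonempty := by
    obtain ⟨v, hv⟩ := c₁.exists_rep
    exact ⟨v, by simp only [hT₁, Finset.mem_filter, Finset.mem_attach, true_and]; exact hv⟩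
  have hne₂ : T₂.Nonempty := by
    obtain ⟨v, hv⟩ := c₂.exists_rep
    exact ⟨v, by simp only [hT₂, Finset.mem_filter, Finset.mem_attach, true_and]; exact hv⟩
  have hcards : T₁.card + T₂.card = M + 1 := by
    rw [← Finset.card_union_of_disjoint hdisj, ← hunion, Finset.card_attach, hcard]
  set f : Finset ℕ → ℕ × ℕ := fun I => (sInf (↑I : Set ℕ) - 1, sSup (↑I : Set ℕ) + 1) with hf
  have hfI : ∀ a b : ℕ, 1 ≤ a → a ≤ b → f (Finset.Icc a b) = (a - 1, b + 1) := by
    intro a b ha hab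
    simp only [hf, Finset.coe_Icc]
    rw [csInf_Icc hab, csSup_Icc hab]
  have hsingle : T₁.card = 1 ∨ T₂.card = 1 := by
    by_contra hcon
    push_neg at hcon
    have h21 : 2 ≤ T₁.card := by
      have := Finset.card_pos.mpr hne₁
      omega
    have h22 : 2 ≤ T₂.card := by
      have := Finset.card_pos.mpr hne₂
      omega
    have hfinj : ∀ (T : Finset {I // I ∈ S}),
        (T.image (fun v => f v.1)).card = T.card := by
      intro T
      apply Finset.card_image_of_injOn
      intro v _ w _ hvw0
      have hvw : f v.1 = f w.1 := hvw0
      obtain ⟨a, b, ha, hab, hb, hv'⟩ := (hS v.1 v.2).1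
      obtain ⟨c, d, hc, hcd, hd, hw'⟩ := (hS w.1 w.2).1
      rw [hv', hw', hfI a b ha hab, hfI c d hc hcd] at hvw
      simp only [Prod.mk.injEq] at hvw
      have hacbd : a = c ∧ b = d := by omega
      apply Subtype.ext
      rw [hv', hw', hacbd.1, hacbd.2]
    have hprop : ∀ (T : Finset {I // I ∈ S}), ∀ p ∈ T.image (fun v => f v.1),
        p.1 < p.2 ∧ p.2 ≤ (n+1) + 1 := by
      intro T p hp
      simp only [Finset.mem_image] at hp
      obtain ⟨v, hv, rfl⟩ := hp
      obtain ⟨a, b, ha, hab, hb, hv'⟩ := (hS v.1 v.2).1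
      show (f v.1).1 < (f v.1).2 ∧ (f v.1).2 ≤ (n+1) + 1
      rw [hv', hfI a b ha hab]
      simp only
      omega
    have hdc : ∀ p ∈ T₁.image (fun v => f v.1), ∀ q ∈ T₂.image (fun v => f v.1),
        dcross p q := by
      intro p hp q hq
      simp only [Finset.mem_image] at hp hq
      obtain ⟨v, hv, rfl⟩ := hp
      obtain ⟨w, hw, rfl⟩ := hq
      show dcross (f v.1) (f w.1)
      obtain ⟨hrel, hne⟩ := hcross v hv w hw
      obtain ⟨a, b, ha, hab, hb, hv'⟩ := (hS v.1 v.2).1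
      obtain ⟨c, d, hc, hcd, hd, hw'⟩ := (hS w.1 w.2).1
      rw [hv', hw'] at hrel
      rw [irel_iff ha hab hb hc hcd hd] at hrel
      rw [hv', hw', hfI a b ha hab, hfI c d hc hcd]
      simp only [dcross]
      omega
    set A : Finset (ℕ × ℕ) := T₁.image (fun v => f v.1) with hA
    set B : Finset (ℕ × ℕ) := T₂.image (fun v => f v.1) with hB
    have hcardA : A.card = T₁.card := hfinj T₁
    have hcardB : B.card = T₂.card := hfinj T₂
    have hkey := key_lemma (m := n+1) A B (hprop T₁) (hprop T₂) hdc
      (hcardA ▸ h21) (hcardB ▸ h22)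
    rw [hcardA, hcardB, ← hM] at hkey
    omega
  have finish : ∀ (Ta Tb : Finset {I // I ∈ S}), S.attach = Ta ∪ Tb → Disjoint Ta Tb →
      Ta.card = 1 → (∀ v ∈ Ta, ∀ w ∈ Tb, iRel n v.1 w.1 ∧ v.1 ≠ w.1) →
      ∃ γ ∈ S, iCount n γ = iMax n ∧
        ∀ J : Finset ℕ, (J ∈ S ∧ J ≠ γ) ↔ (IsInterval n J ∧ iRel n γ J) := by
    intro Ta Tb hun hdj hca hcr
    obtain ⟨v, hv⟩ := Finset.card_eq_one.mp hca
    obtain ⟨a, b, ha, hab, hb, hγ'⟩ := (hS v.1 v.2).1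
    have hTb : ∀ J : Finset ℕ, J ∈ S → J ≠ v.1 → iRel n v.1 J := by
      intro J hJ hJγ
      have hJa : (⟨J, hJ⟩ : {I // I ∈ S}) ∈ S.attach := Finset.mem_attach _ _
      rw [hun] at hJa
      rcases Finset.mem_union.mp hJa with h | h
      · rw [hv] at h
        have heq := Finset.mem_singleton.mp h
        exact absurd (congrArg Subtype.val heq) hJγ
      · exact (hcr v (by rw [hv]; exact Finset.mem_singleton_self v) ⟨J, hJ⟩ h).1
    have herase : S.erase v.1 ⊆ nbhd n a b := by
      intro J hJ
      obtain ⟨hJγ, hJS⟩ := Finset.mem_erase.mp hJ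
      have hrel := hTb J hJS hJγ
      have hint := (hS J hJS).1
      have hmem : J ∈ ({J : Finset ℕ | IsInterval n J ∧ iRel n (Finset.Icc a b) J} :
          Set (Finset ℕ)) := by
        rw [← hγ']
        exact ⟨hint, hrel⟩
      rw [nbhd_sets ha hab hb] at hmem
      exact hmem
    have herasecard : (S.erase v.1).card = M := by
      rw [Finset.card_erase_of_mem v.2, hcard]
      omega
    have hiC : iCount n v.1 = (nbhd n a b).card := by
      rw [hγ', iCount]
      have h0 : Nat.card {J : Finset ℕ // IsInterval n J ∧ iRel n (Finset.Icc a b) J}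
          = ({J : Finset ℕ | IsInterval n J ∧ iRel n (Finset.Icc a b) J} :
            Set (Finset ℕ)).ncard :=
        Nat.card_coe_set_eq _
      rw [h0, nbhd_sets ha hab hb, Set.ncard_coe_finset]
    have hnle : (nbhd n a b).card ≤ M := by
      rw [← hiC, hγ', hM]
      exact iCount_le ha hab hb
    have hge : M ≤ (nbhd n a b).card := by
      rw [← herasecard]
      exact Finset.card_le_card herase
    have hEq : S.erase v.1 = nbhd n a b :=
      Finset.eq_of_subset_of_card_le herase (by omega)
    refine ⟨v.1, v.2, ?_, ?_⟩
    · rw [iMax_eq, ← hM, hiC]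
      omega
    · intro J
      constructor
      · rintro ⟨hJS, hJγ⟩
        exact ⟨(hS J hJS).1, hTb J hJS hJγ⟩
      · rintro ⟨hint, hrel⟩
        have hmem : J ∈ nbhd n a b := by
          have hmem' : J ∈ ({J : Finset ℕ | IsInterval n J ∧ iRel n (Finset.Icc a b) J} :
              Set (Finset ℕ)) := by
            rw [← hγ']
            exact ⟨hint, hrel⟩
          rw [nbhd_sets ha hab hb] at hmem'
          exact hmem'
        rw [← hEq] at hmem
        obtain ⟨hJγ, hJS⟩ := Finset.mem_erase.mp hmem
        exact ⟨hJS, hJγ⟩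
  rcases hsingle with h | h
  · exact finish T₁ T₂ hunion hdisj h hcross
  · refine finish T₂ T₁ (by rw [hunion, Finset.union_comm]) hdisj.symm h ?_
    intro v hv w hw
    obtain ⟨hrel, hne⟩ := hcross w hw v hv
    refine ⟨?_, hne.symm⟩
    obtain ⟨a, b, ha, hab, hb, hv'⟩ := (hS v.1 v.2).1
    obtain ⟨c, d, hc, hcd, hd, hw'⟩ := (hS w.1 w.2).1
    rw [hv', hw'] at hrel ⊢
    rw [irel_iff hc hcd hd ha hab hb] at hrel
    rw [irel_iff ha hab hb hc hcd hd]
    omega
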